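/- Let n ≥ 1, M ≥ 0, and let H : ℝⁿ → ℝ be convex with H(0) = 0 and |p|² ≤ H(p) ≤ |p|² + M|p| for all p ∈ ℝⁿ, and assume H is radially strictly convex. Then for every θ > 0 there exists μ > 0 such that for every p ∈ ℝⁿ with |p| ≥ θ and every subgradient q of H at p, one has q·p ≥ H(p) + μ. -/

import Mathlib

open scoped RealInnerProductSpace

/-- `q` is a subgradient of `F` at `p`. -/
def IsSubgradient {n : ℕ} (F : EuclideanSpace ℝ (Fin n) → ℝ)
    (p q : EuclideanSpace ℝ (Fin n)) : Prop :=
  ∀ y, F y ≥ F p + ⟪q, y - p⟫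

/-- `H` is radially strictly convex: whenever `H` is affine on a segment `[p₁, p₂]`
with `H(p₂) > 0`, it is constant on that segment. -/
def RadStrictConvex {n : ℕ} (H : EuclideanSpace ℝ (Fin n) → ℝ) : Prop :=
  ∀ p₁ p₂ : EuclideanSpace ℝ (Fin n),
    (∀ s ∈ Set.Icc (0:ℝ) 1,
      H ((1 - s) • p₁ + s • p₂) = (1 - s) * H p₁ + s * H p₂) →
    0 < H p₂ →
    ∀ s ∈ Set.Icc (0:ℝ) 1, H ((1 - s) • p₁ + s • p₂) = H p₂

/-- Let `H` be convex with `H(0) = 0`, `|p|² ≤ H(p) ≤ |p|² + M|p|`, and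
radially strictly convex.  Then for every `θ > 0` there is `μ > 0` such that
`q·p ≥ H(p) + μ` for all `|p| ≥ θ` and all subgradients `q` of `H` at `p`. -/


lemma aux_affine {n : ℕ} (H : EuclideanSpace ℝ (Fin n) → ℝ)
    (hconv : ConvexOn ℝ Set.univ H) (h0 : H 0 = 0)
    (p : EuclideanSpace ℝ (Fin n)) (hmid : H ((1/2 : ℝ) • p) = (1/2) * H p) :
    ∀ s ∈ Set.Icc (0:ℝ) 1, H (s • p) = s * H p := by
  have upper : ∀ s ∈ Set.Icc (0:ℝ) 1, H (s • p) ≤ s * H p := by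
    intro s hs
    have := hconv.2 (Set.mem_univ (0 : EuclideanSpace ℝ (Fin n))) (Set.mem_univ p)
      (by linarith [hs.2] : (0:ℝ) ≤ 1 - s) hs.1 (by ring)
    simpa [h0] using this
  intro s hs
  refine le_antisymm (upper s hs) ?_
  rcases le_or_gt s (1/2) with hle | hgt
  · -- s ≤ 1/2, s < 1
    have h1s : (0:ℝ) < 1 - s := by linarith
    set a : ℝ := 1 / (2 * (1 - s)) with ha
    have ha0 : 0 ≤ a := by positivity
    have ha1 : a ≤ 1 := by rw [ha, div_le_one (by linarith)]; linarith
    have hvec : a • (s • p) + (1 - a) • p = (1/2 : ℝ) • p := by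
      rw [smul_smul, ← add_smul]
      congr 1
      rw [ha]; field_simp; ring
    have hcv := hconv.2 (Set.mem_univ (s • p)) (Set.mem_univ p) ha0
      (by linarith : (0:ℝ) ≤ 1 - a) (by ring)
    rw [hvec, hmid] at hcv
    simp only [smul_eq_mul] at hcv
    have hne : (1 - s) ≠ 0 := ne_of_gt h1s
    rw [ha] at hcv
    have h2 := mul_le_mul_of_nonneg_left hcv (by linarith : (0:ℝ) ≤ 2*(1-s))
    have hexp : 2*(1-s) * (1/(2*(1-s)) * H (s • p) + (1 - 1/(2*(1-s))) * H p)
        = H (s • p) + (2*(1-s) - 1) * H p := by field_simp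
    rw [hexp] at h2
    linarith
  · -- s > 1/2 > 0
    have hs0 : (0:ℝ) < s := by linarith
    set u : ℝ := 1 / (2 * s) with hu
    have hu0 : 0 ≤ u := by positivity
    have hu1 : u ≤ 1 := by rw [hu, div_le_one (by linarith)]; linarith
    have hvec : u • (s • p) + (1 - u) • (0 : EuclideanSpace ℝ (Fin n)) = (1/2 : ℝ) • p := by
      rw [smul_smul, smul_zero, add_zero]
      congr 1
      rw [hu]; field_simp
    have hcv := hconv.2 (Set.mem_univ (s • p))
      (Set.mem_univ (0 : EuclideanSpace ℝ (Fin n))) hu0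
      (by linarith : (0:ℝ) ≤ 1 - u) (by ring)
    rw [hvec, hmid, h0] at hcv
    simp only [smul_eq_mul] at hcv
    have hne : s ≠ 0 := ne_of_gt hs0
    rw [hu] at hcv
    have h2 := mul_le_mul_of_nonneg_left hcv (by linarith : (0:ℝ) ≤ 2*s)
    have hexp : 2*s * (1/(2*s) * H (s • p) + (1 - 1/(2*s)) * 0) = H (s • p) := by
      field_simp; ring
    rw [hexp] at h2
    linarith


theorem statement17 {n : ℕ} (hn : 1 ≤ n) (M : ℝ) (hM : 0 ≤ M)
    (H : EuclideanSpace ℝ (Fin n) → ℝ) (hconv : ConvexOn ℝ Set.univ H)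
    (h0 : H 0 = 0)
    (hbounds : ∀ p, ‖p‖ ^ 2 ≤ H p ∧ H p ≤ ‖p‖ ^ 2 + M * ‖p‖)
    (hrad : RadStrictConvex H) :
    ∀ θ > (0:ℝ), ∃ μ > (0:ℝ), ∀ p : EuclideanSpace ℝ (Fin n), ‖p‖ ≥ θ →
      ∀ q, IsSubgradient H p q → ⟪q, p⟫ ≥ H p + μ := by
  intro θ hθ
  set G : (EuclideanSpace ℝ (Fin n)) → ℝ := fun p => H p - 2 * H ((1/2 : ℝ) • p) with hG
  have hHcont : Continuous H := hconv.locallyLipschitz.continuous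
  have hGcont : Continuous G := by
    exact (hHcont.sub ((continuous_const.mul (hHcont.comp (continuous_const_smul _)))))
  -- G is positive on ‖p‖ ≥ θ
  have hGpos : ∀ p : (EuclideanSpace ℝ (Fin n)), θ ≤ ‖p‖ → 0 < G p := by
    intro p hp
    have hHp : 0 < H p := by
      have h1 := (hbounds p).1
      nlinarith [hθ, hp]
    have hupper : H ((1/2 : ℝ) • p) ≤ (1/2) * H p := by
      have := hconv.2 (Set.mem_univ (0 : (EuclideanSpace ℝ (Fin n)))) (Set.mem_univ p)
        (by norm_num : (0:ℝ) ≤ 1 - 1/2) (by norm_num : (0:ℝ) ≤ (1/2:ℝ)) (by norm_num)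
      simpa [h0] using this
    by_contra hcon
    push_neg at hcon
    have hmid : H ((1/2 : ℝ) • p) = (1/2) * H p := by
      simp only [hG] at hcon; linarith
    have haff := aux_affine H hconv h0 p hmid
    have hrad' := hrad 0 p (by
      intro s hs
      have : (1 - s) • (0 : (EuclideanSpace ℝ (Fin n))) + s • p = s • p := by simp
      rw [this, h0, haff s hs]; ring) hHp
    have h00 := hrad' 0 (by norm_num)
    have : (1 - (0:ℝ)) • (0 : (EuclideanSpace ℝ (Fin n))) + (0:ℝ) • p = 0 := by simp
    rw [this, h0] at h00
    linarith
  -- compact annulus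
  set R : ℝ := max θ (2*M + 2) with hR
  set S : Set (EuclideanSpace ℝ (Fin n)) := {p | θ ≤ ‖p‖} ∩ Metric.closedBall 0 R with hS
  have hSclosed : IsClosed S :=
    (isClosed_le continuous_const continuous_norm).inter Metric.isClosed_closedBall
  have hScompact : IsCompact S := (isCompact_closedBall (0:(EuclideanSpace ℝ (Fin n))) R).inter_left
    (isClosed_le continuous_const continuous_norm)
  have hSne : S.Nonempty := by
    refine ⟨θ • EuclideanSpace.single (⟨0, hn⟩ : Fin n) (1:ℝ), ?_, ?_⟩
    · show θ ≤ ‖_‖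
      rw [norm_smul, EuclideanSpace.norm_single]
      simp [abs_of_pos hθ]
    · rw [Metric.mem_closedBall, dist_zero_right, norm_smul, EuclideanSpace.norm_single]
      simp [abs_of_pos hθ, hR, le_max_left]
  obtain ⟨pm, hpmS, hpm⟩ := hScompact.exists_isMinOn hSne hGcont.continuousOn
  have hμ0 : 0 < G pm := hGpos pm hpmS.1
  refine ⟨min (G pm) 1, lt_min hμ0 one_pos, ?_⟩
  intro p hp q hq
  -- subgradient inequality at y = (1/2) • p
  have hsub := hq ((1/2 : ℝ) • p)
  have hvec : (1/2 : ℝ) • p - p = (-(1/2) : ℝ) • p := by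
    rw [← one_smul ℝ p, smul_smul, ← sub_smul]; norm_num
  rw [hvec, real_inner_smul_right] at hsub
  have hgap : ⟪q, p⟫ ≥ H p + G p := by simp only [hG]; linarith
  have hGlb : min (G pm) 1 ≤ G p := by
    rcases le_or_gt ‖p‖ R with hle | hgt
    · have hpS : p ∈ S := ⟨hp, by rwa [Metric.mem_closedBall, dist_zero_right]⟩
      exact le_trans (min_le_left _ _) (hpm hpS)
    · refine le_trans (min_le_right _ _) ?_
      have h1 := (hbounds p).1
      have h2 := (hbounds ((1/2 : ℝ) • p)).2
      have hnorm : ‖(1/2 : ℝ) • p‖ = (1/2) * ‖p‖ := by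
        rw [norm_smul]; norm_num
      rw [hnorm] at h2
      have hpbig : 2*M + 2 ≤ ‖p‖ := le_of_lt (lt_of_le_of_lt (le_max_right θ _) hgt)
      simp only [hG]
      nlinarith [h1, h2, hpbig, hM]
  linarith [hgap, hGlb]
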